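/- arXiv:1902.10184 — 3 statements merged into one kernel-verified Lean document; each statement's English description precedes it below -/
import Mathlib

section
/- If the difference inclusion generated by matrices A_1, …, A_M ∈ ℝ^{n×n} is weakly convergent, then it admits a weak convex Lyapunov function: there exists a norm N on ℝⁿ such that N(Aᵢ x) ≤ N(x) for every i ∈ {1, …, M} and every x ∈ ℝⁿ. -/
open Matrix Filter

/-- `w` lies in the unit simplex `W ⊆ ℝ^M`. -/
def InSimplex {M : ℕ} (w : Fin M → ℝ) : Prop :=
  (∀ i, 0 ≤ w i) ∧ ∑ i, w i = 1

/-- The convex combination `A(w) = ∑ᵢ wᵢ Aᵢ`. -/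
def Amix {n M : ℕ} (A : Fin M → Matrix (Fin n) (Fin n) ℝ) (w : Fin M → ℝ) :
    Matrix (Fin n) (Fin n) ℝ :=
  ∑ i, w i • A i

/-- `x` is a solution of the difference inclusion generated by `A₁, …, A_M`. -/
def IsInclusionSolution {n M : ℕ} (A : Fin M → Matrix (Fin n) (Fin n) ℝ)
    (x : ℕ → Fin n → ℝ) : Prop :=
  ∃ w : ℕ → Fin M → ℝ, (∀ k, InSimplex (w k)) ∧
    ∀ k, x (k + 1) = (Amix A (w k)) *ᵥ (x k)

/-- Weak convergence: every solution of the difference inclusion has a limit. -/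
def WeaklyConvergent {n M : ℕ} (A : Fin M → Matrix (Fin n) (Fin n) ℝ) : Prop :=
  ∀ x : ℕ → Fin n → ℝ, IsInclusionSolution A x →
    ∃ xbar : Fin n → ℝ, Tendsto x atTop (nhds xbar)

/-- Strong convergence: every solution converges to a point of `⋂ᵢ ker(Aᵢ − I)`. -/
def StronglyConvergent {n M : ℕ} (A : Fin M → Matrix (Fin n) (Fin n) ℝ) : Prop :=
  ∀ x : ℕ → Fin n → ℝ, IsInclusionSolution A x →
    ∃ xbar : Fin n → ℝ, (∀ i, (A i - 1) *ᵥ xbar = 0) ∧ Tendsto x atTop (nhds xbar)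

namespace WCLF

open scoped ENNReal NNReal

variable {n M : ℕ}

/-- Apply the matrices listed in `w` (in order) to `x`. -/
def app (A : Fin M → Matrix (Fin n) (Fin n) ℝ) : List (Fin M) → (Fin n → ℝ) → (Fin n → ℝ)
  | [], x => x
  | i :: w, x => app A w (A i *ᵥ x)

variable (A : Fin M → Matrix (Fin n) (Fin n) ℝ)

@[simp] lemma app_nil (x : Fin n → ℝ) : app A [] x = x := rfl

@[simp] lemma app_cons (i : Fin M) (w : List (Fin M)) (x : Fin n → ℝ) :
    app A (i :: w) x = app A w (A i *ᵥ x) := rfl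

lemma app_append (u w : List (Fin M)) (x : Fin n → ℝ) :
    app A (u ++ w) x = app A w (app A u x) := by
  induction u generalizing x with
  | nil => rfl
  | cons i u ih => simp [ih]

lemma app_add (w : List (Fin M)) (x y : Fin n → ℝ) :
    app A w (x + y) = app A w x + app A w y := by
  induction w generalizing x y with
  | nil => rfl
  | cons i w ih => simp [Matrix.mulVec_add, ih]

lemma app_smul (w : List (Fin M)) (a : ℝ) (x : Fin n → ℝ) :
    app A w (a • x) = a • app A w x := by
  induction w generalizing x with
  | nil => rfl
  | cons i w ih => simp [Matrix.mulVec_smul, ih]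

lemma app_zero (w : List (Fin M)) : app A w (0 : Fin n → ℝ) = 0 := by
  have := app_smul A w 0 0
  simpa using this

/-- The (possibly infinite) sup of norms along all finite switching words. -/
noncomputable def gg (x : Fin n → ℝ) : ℝ≥0∞ :=
  ⨆ w : List (Fin M), (‖app A w x‖₊ : ℝ≥0∞)

lemma le_gg (w : List (Fin M)) (x : Fin n → ℝ) :
    (‖app A w x‖₊ : ℝ≥0∞) ≤ gg A x := le_iSup (fun w => ((‖app A w x‖₊ : ℝ≥0∞))) w

lemma norm_le_gg (x : Fin n → ℝ) : (‖x‖₊ : ℝ≥0∞) ≤ gg A x := le_gg A [] x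

@[simp] lemma gg_zero : gg A (0 : Fin n → ℝ) = 0 := by
  simp [gg, app_zero]

lemma gg_add (x y : Fin n → ℝ) : gg A (x + y) ≤ gg A x + gg A y := by
  refine iSup_le fun w => ?_
  rw [app_add]
  calc (‖app A w x + app A w y‖₊ : ℝ≥0∞) ≤ (‖app A w x‖₊ : ℝ≥0∞) + ‖app A w y‖₊ := by
        exact_mod_cast nnnorm_add_le _ _
    _ ≤ gg A x + gg A y := add_le_add (le_gg A w x) (le_gg A w y)

lemma gg_smul (a : ℝ) (x : Fin n → ℝ) : gg A (a • x) = (‖a‖₊ : ℝ≥0∞) * gg A x := by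
  simp only [gg, ENNReal.mul_iSup]
  congr 1
  funext w
  rw [app_smul, nnnorm_smul, ENNReal.coe_mul]

lemma gg_step (i : Fin M) (x : Fin n → ℝ) : gg A (A i *ᵥ x) ≤ gg A x := by
  refine iSup_le fun w => ?_
  exact le_gg A (i :: w) x

/-- König step: if the orbit sup is infinite, some one-step successor also has infinite sup. -/
lemma koenig {x : Fin n → ℝ} (hx : gg A x = ⊤) : ∃ i, gg A (A i *ᵥ x) = ⊤ := by
  by_contra hc
  push_neg at hc
  have hB : (∑ i, gg A (A i *ᵥ x)) ≠ ⊤ := by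
    rw [← lt_top_iff_ne_top, ENNReal.sum_lt_top]
    exact fun i _ => lt_top_iff_ne_top.mpr (hc i)
  have : gg A x ≤ (‖x‖₊ : ℝ≥0∞) + ∑ i, gg A (A i *ᵥ x) := by
    refine iSup_le fun w => ?_
    match w with
    | [] => exact le_add_right (le_refl _)
    | i :: w' =>
      refine le_add_left ?_
      calc (‖app A (i :: w') x‖₊ : ℝ≥0∞) = ‖app A w' (A i *ᵥ x)‖₊ := rfl
        _ ≤ gg A (A i *ᵥ x) := le_gg A w' _
        _ ≤ ∑ j, gg A (A j *ᵥ x) :=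
            Finset.single_le_sum (f := fun j => gg A (A j *ᵥ x)) (fun j _ => zero_le)
              (Finset.mem_univ i)
  rw [hx] at this
  exact (ENNReal.add_ne_top.mpr ⟨ENNReal.coe_ne_top, hB⟩) (top_le_iff.mp this)

/-- The subspace of vectors with bounded orbit. -/
noncomputable def VV : Submodule ℝ (Fin n → ℝ) where
  carrier := {x | gg A x ≠ ⊤}
  add_mem' := by
    intro x y hx hy
    simp only [Set.mem_setOf_eq] at *
    exact ne_top_of_le_ne_top (ENNReal.add_ne_top.mpr ⟨hx, hy⟩) (gg_add A x y)
  zero_mem' := by simp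
  smul_mem' := by
    intro a x hx
    simp only [Set.mem_setOf_eq] at *
    rw [gg_smul]
    exact ENNReal.mul_ne_top ENNReal.coe_ne_top hx

/-- On the bounded-orbit subspace, `gg` is dominated by a multiple of the norm. -/
lemma exists_bound : ∃ C : ℝ≥0∞, C ≠ ⊤ ∧ ∀ x : Fin n → ℝ, gg A x ≠ ⊤ →
    gg A x ≤ C * ‖x‖₊ := by
  classical
  set V := VV A with hV
  have hb : ∀ v : V, gg A (v : Fin n → ℝ) ≠ ⊤ := fun v => v.2
  let b := Module.finBasis ℝ V
  let f : Fin (Module.finrank ℝ V) → (V →L[ℝ] ℝ) :=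
    fun i => LinearMap.toContinuousLinearMap (b.coord i)
  refine ⟨∑ i, (‖f i‖₊ : ℝ≥0∞) * gg A ((b i : V) : Fin n → ℝ), ?_, ?_⟩
  · rw [← lt_top_iff_ne_top, ENNReal.sum_lt_top]
    intro i _
    exact lt_top_iff_ne_top.mpr (ENNReal.mul_ne_top ENNReal.coe_ne_top (hb (b i)))
  · intro x hx
    set v : V := ⟨x, hx⟩ with hv
    have hnv : ‖v‖₊ = ‖x‖₊ := rfl
    have hxv : x = ((∑ i, b.repr v i • b i : V) : Fin n → ℝ) := by
      rw [b.sum_repr v]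
    have hco : ((∑ i, b.repr v i • b i : V) : Fin n → ℝ)
        = ∑ i, b.repr v i • ((b i : V) : Fin n → ℝ) := by
      push_cast
      rfl
    calc gg A x = gg A (∑ i, b.repr v i • ((b i : V) : Fin n → ℝ)) := by
          conv_lhs => rw [hxv, hco]
      _ ≤ ∑ i, gg A (b.repr v i • ((b i : V) : Fin n → ℝ)) :=
          Finset.le_sum_of_subadditive (gg A) (gg_zero A).le (gg_add A) _ _
      _ = ∑ i, (‖b.repr v i‖₊ : ℝ≥0∞) * gg A ((b i : V) : Fin n → ℝ) := by
          exact Finset.sum_congr rfl fun i _ => gg_smul A _ _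
      _ ≤ ∑ i, ((‖f i‖₊ : ℝ≥0∞) * ‖x‖₊) * gg A ((b i : V) : Fin n → ℝ) := by
          refine Finset.sum_le_sum fun i _ => ?_
          refine mul_le_mul_left ?_ _
          have h1 : ‖b.repr v i‖₊ ≤ ‖f i‖₊ * ‖v‖₊ := by
            have : b.repr v i = f i v := by
              simp [f, Module.Basis.coord_apply]
            rw [this]
            exact (f i).le_opNNNorm v
          rw [hnv] at h1
          exact_mod_cast h1
      _ = (∑ i, (‖f i‖₊ : ℝ≥0∞) * gg A ((b i : V) : Fin n → ℝ)) * ‖x‖₊ := by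
          rw [Finset.sum_mul]
          exact Finset.sum_congr rfl fun i _ => by ring

/-- A uniform operator bound for the `A i`. -/
lemma exists_L : ∃ L : ℝ≥0, ∀ (i : Fin M) (x : Fin n → ℝ), ‖A i *ᵥ x‖₊ ≤ L * ‖x‖₊ := by
  classical
  let cl : Fin M → ((Fin n → ℝ) →L[ℝ] (Fin n → ℝ)) :=
    fun i => LinearMap.toContinuousLinearMap (A i).mulVecLin
  refine ⟨Finset.univ.sup fun i => ‖cl i‖₊, fun i x => ?_⟩
  have h1 : ‖A i *ᵥ x‖₊ = ‖cl i x‖₊ := by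
    simp [cl]
  rw [h1]
  calc ‖cl i x‖₊ ≤ ‖cl i‖₊ * ‖x‖₊ := (cl i).le_opNNNorm x
    _ ≤ (Finset.univ.sup fun i => ‖cl i‖₊) * ‖x‖₊ :=
        mul_le_mul_left (Finset.le_sup (f := fun i => ‖cl i‖₊) (Finset.mem_univ i)) _

/-- First exit of the unbounded-orbit region along a word. -/
lemma first_exit : ∀ (w : List (Fin M)) (x : Fin n → ℝ), gg A x = ⊤ →
    gg A (app A w x) ≠ ⊤ →
    ∃ p i s, w = p ++ i :: s ∧ gg A (app A p x) = ⊤ ∧ gg A (app A (p ++ [i]) x) ≠ ⊤ := by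
  intro w
  induction w with
  | nil => exact fun x h h' => absurd h h'
  | cons j w ih =>
    intro x h h'
    by_cases hj : gg A (A j *ᵥ x) = ⊤
    · obtain ⟨p, i, s, hw, h1, h2⟩ := ih (A j *ᵥ x) hj (by simpa using h')
      refine ⟨j :: p, i, s, by simp [hw], by simpa using h1, ?_⟩
      have : app A ((j :: p) ++ [i]) x = app A (p ++ [i]) (A j *ᵥ x) := rfl
      rw [this]
      exact h2
    · exact ⟨[], j, w, rfl, by simpa using h, by simpa using hj⟩

/-- Key lemma: from a point with unbounded orbit one can reach points of arbitrarily
large norm that still have unbounded orbit. -/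
lemma reach_big {y : Fin n → ℝ} (hy : gg A y = ⊤) (K : ℝ≥0∞) (hK : K ≠ ⊤) :
    ∃ w, K ≤ (‖app A w y‖₊ : ℝ≥0∞) ∧ gg A (app A w y) = ⊤ := by
  by_contra hcon
  push_neg at hcon
  have hsmall : ∀ w, gg A (app A w y) = ⊤ → (‖app A w y‖₊ : ℝ≥0∞) < K := by
    intro w hw
    by_contra hge
    exact absurd hw ((hcon w (le_of_not_gt hge)))
  obtain ⟨C, hC, hCb⟩ := exists_bound A
  obtain ⟨L, hL⟩ := exists_L A
  set bb : ℝ≥0∞ := K ⊔ (C * L * K) with hbb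
  have hbbne : bb < ⊤ := by
    rw [hbb]
    exact max_lt (lt_top_iff_ne_top.mpr hK)
      (lt_top_iff_ne_top.mpr (ENNReal.mul_ne_top (ENNReal.mul_ne_top hC ENNReal.coe_ne_top) hK))
  obtain ⟨w, hwbig⟩ := iSup_eq_top.mp hy bb hbbne
  have hwne : gg A (app A w y) ≠ ⊤ := by
    intro hw
    exact absurd (hsmall w hw) (not_lt.mpr ((le_sup_left.trans hwbig.le)))
  obtain ⟨p, i, s, hdec, h1, h2⟩ := first_exit A w y hy hwne
  set q := app A p y with hq
  have hqK : (‖q‖₊ : ℝ≥0∞) ≤ K := (hsmall p h1).le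
  set r := app A (p ++ [i]) y with hr
  have hri : r = A i *ᵥ q := by
    rw [hr, app_append]
    rfl
  have hrn : (‖r‖₊ : ℝ≥0∞) ≤ (L : ℝ≥0∞) * K := by
    rw [hri]
    calc (‖A i *ᵥ q‖₊ : ℝ≥0∞) ≤ ((L * ‖q‖₊ : ℝ≥0) : ℝ≥0∞) := by exact_mod_cast hL i q
      _ = (L : ℝ≥0∞) * ‖q‖₊ := by push_cast; ring
      _ ≤ (L : ℝ≥0∞) * K := mul_le_mul_right hqK _
  have hgr : gg A r ≤ C * L * K := by
    calc gg A r ≤ C * ‖r‖₊ := hCb r h2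
      _ ≤ C * ((L : ℝ≥0∞) * K) := mul_le_mul_right hrn _
      _ = C * L * K := by ring
  have hbig2 : bb < gg A r := by
    refine lt_of_lt_of_le hwbig ?_
    have : app A w y = app A s r := by
      rw [hdec, hr]
      have : p ++ i :: s = (p ++ [i]) ++ s := by simp
      rw [this, app_append]
    rw [this]
    exact le_gg A s r
  exact absurd (hgr.trans le_sup_right) (not_le.mpr hbig2)

/-- Nonempty-word version of `reach_big`, via the König step. -/
lemma reach_big' {y : Fin n → ℝ} (hy : gg A y = ⊤) (K : ℝ≥0∞) (hK : K ≠ ⊤) :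
    ∃ w, w ≠ [] ∧ K ≤ (‖app A w y‖₊ : ℝ≥0∞) ∧ gg A (app A w y) = ⊤ := by
  obtain ⟨i, hi⟩ := koenig A hy
  obtain ⟨w, h1, h2⟩ := reach_big A hi K hK
  exact ⟨i :: w, by simp, by simpa using h1, by simpa using h2⟩

lemma InSimplex_single (i : Fin M) : InSimplex (Pi.single i (1:ℝ)) := by
  constructor
  · intro j
    by_cases hj : j = i <;> simp [Pi.single_apply, hj]
  · simp [Finset.sum_pi_single']

lemma Amix_single (i : Fin M) : Amix A (Pi.single i 1) = A i := by
  unfold Amix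
  rw [Finset.sum_eq_single i]
  · simp
  · intro j _ hj
    rw [Pi.single_eq_of_ne hj, zero_smul]
  · intro hni
    exact absurd (Finset.mem_univ i) hni

/-- Main boundedness lemma: weak convergence implies every orbit sup is finite. -/
lemma gg_ne_top (h : WeaklyConvergent A) : ∀ x : Fin n → ℝ, gg A x ≠ ⊤ := by
  intro x hx
  have step : ∀ (y : {y : Fin n → ℝ // gg A y = ⊤}) (k : ℕ),
      ∃ w : List (Fin M), w ≠ [] ∧ ((k : ℝ≥0∞) ≤ (‖app A w (↑y : Fin n → ℝ)‖₊ : ℝ≥0∞))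
        ∧ gg A (app A w (↑y : Fin n → ℝ)) = ⊤ :=
    fun y k => reach_big' A y.2 (k : ℝ≥0∞) (ENNReal.natCast_ne_top k)
  choose W hW1 hW2 hW3 using step
  let S := {y : Fin n → ℝ // gg A y = ⊤}
  let G : ℕ → S × List (Fin M) := fun m => Nat.rec (⟨⟨x, hx⟩, ([] : List (Fin M))⟩)
    (fun k p => ⟨⟨app A (W p.1 (k+1)) (↑p.1 : Fin n → ℝ), hW3 p.1 (k+1)⟩,
      p.2 ++ W p.1 (k+1)⟩) m
  have hGx : ∀ k, app A (G k).2 x = ↑(G k).1 := by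
    intro k
    induction k with
    | zero => rfl
    | succ k ih =>
      show app A ((G k).2 ++ W (G k).1 (k+1)) x = _
      rw [app_append, ih]
  have hlen : ∀ k, k ≤ (G k).2.length := by
    intro k
    induction k with
    | zero => simp
    | succ k ih =>
      show k + 1 ≤ ((G k).2 ++ W (G k).1 (k+1)).length
      rw [List.length_append]
      have h1 : 0 < (W (G k).1 (k+1)).length := List.length_pos_iff.mpr (hW1 _ _)
      omega
  have hpre : ∀ k m, k ≤ m → (G k).2 <+: (G m).2 := by
    intro k m hkm
    refine Nat.le_induction ?_ ?_ m hkm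
    · exact List.prefix_refl _
    · intro m _ ih
      exact ih.trans ⟨W (G m).1 (m+1), rfl⟩
  have hnormk : ∀ k : ℕ, ((k : ℕ) : ℝ≥0∞) ≤ (‖(↑(G k).1 : Fin n → ℝ)‖₊ : ℝ≥0∞) := by
    intro k
    cases k with
    | zero => simp
    | succ k => exact hW2 (G k).1 (k+1)
  have hlt : ∀ t, t < (G (t+1)).2.length :=
    fun t => lt_of_lt_of_le (Nat.lt_succ_self t) (hlen (t+1))
  let σ : ℕ → Fin M := fun t => (G (t+1)).2.get ⟨t, hlt t⟩
  let X : ℕ → Fin n → ℝ := fun t => app A ((G (t+1)).2.take t) x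
  have hstep : ∀ t, X (t+1) = A (σ t) *ᵥ X t := by
    intro t
    obtain ⟨r, hr⟩ := hpre (t+1) (t+2) (by omega)
    have h1 : (G (t+2)).2.take (t+1) = (G (t+1)).2.take (t+1) := by
      rw [← hr]
      exact List.take_append_of_le_length (hlen (t+1))
    have h2 : (G (t+1)).2.take (t+1) = (G (t+1)).2.take t ++ [σ t] := by
      rw [List.take_succ, List.getElem?_eq_getElem (hlt t)]
      rfl
    show app A ((G (t+2)).2.take (t+1)) x = _
    rw [h1, h2, app_append]
    rfl
  have hmark : ∀ k, X ((G k).2.length) = ↑(G k).1 := by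
    intro k
    obtain ⟨r, hr⟩ := hpre k ((G k).2.length + 1) (by have := hlen k; omega)
    show app A ((G ((G k).2.length + 1)).2.take (G k).2.length) x = _
    rw [← hr, List.take_left]
    exact hGx k
  have hsol : IsInclusionSolution A X := by
    refine ⟨fun t => Pi.single (σ t) 1, fun t => InSimplex_single _, fun t => ?_⟩
    rw [Amix_single]
    exact hstep t
  obtain ⟨xbar, hlim⟩ := h X hsol
  have hev : ∀ᶠ t in atTop, dist (X t) xbar < 1 := hlim (Metric.ball_mem_nhds xbar one_pos)
  obtain ⟨t₀, ht₀⟩ := eventually_atTop.mp hev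
  obtain ⟨k₁, hk₁⟩ := exists_nat_gt (‖xbar‖ + 1)
  set k := max t₀ k₁ with hk
  have hT : t₀ ≤ (G k).2.length := le_trans (le_max_left _ _) (hlen k)
  have hd := ht₀ _ hT
  have hnorm : (k : ℝ) ≤ ‖X ((G k).2.length)‖ := by
    have h1 := hnormk k
    rw [← hmark k] at h1
    have h2 : ((k : ℝ≥0) : ℝ≥0∞) ≤ (‖X ((G k).2.length)‖₊ : ℝ≥0∞) := by
      exact_mod_cast h1
    have h3 := ENNReal.coe_le_coe.mp h2
    exact_mod_cast h3
  have hub : ‖X ((G k).2.length)‖ < ‖xbar‖ + 1 := by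
    have h4 : ‖X ((G k).2.length)‖ - ‖xbar‖ ≤ ‖X ((G k).2.length) - xbar‖ :=
      norm_sub_norm_le _ _
    rw [← dist_eq_norm] at h4
    linarith
  have hk₁' : (k₁ : ℝ) ≤ (k : ℝ) := by
    exact_mod_cast le_max_right t₀ k₁
  linarith

end WCLF

/-- weak convergence implies the existence of a weak convex Lyapunov
function, namely a norm `N` on `ℝⁿ` that is non-increasing along every `Aᵢ`. -/
theorem weak_convergence_implies_wCLF
    (n M : ℕ) (A : Fin M → Matrix (Fin n) (Fin n) ℝ)
    (h : WeaklyConvergent A) :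
    ∃ N : (Fin n → ℝ) → ℝ,
      (∀ x, N x = 0 ↔ x = 0) ∧
      (∀ (a : ℝ) (x : Fin n → ℝ), N (a • x) = |a| * N x) ∧
      (∀ x y : Fin n → ℝ, N (x + y) ≤ N x + N y) ∧
      (∀ (i : Fin M) (x : Fin n → ℝ), N ((A i) *ᵥ x) ≤ N x) := by
  classical
  have hfin := WCLF.gg_ne_top A h
  refine ⟨fun x => (WCLF.gg A x).toReal, ?_, ?_, ?_, ?_⟩
  · intro x
    constructor
    · intro h0
      rcases (ENNReal.toReal_eq_zero_iff _).mp h0 with h0 | h0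
      · have h1 := WCLF.norm_le_gg A x
        rw [h0] at h1
        have h2 : ‖x‖₊ = 0 := le_antisymm (by exact_mod_cast h1) zero_le
        simpa using h2
      · exact absurd h0 (hfin x)
    · rintro rfl
      simp
  · intro a x
    show (WCLF.gg A (a • x)).toReal = |a| * (WCLF.gg A x).toReal
    rw [WCLF.gg_smul, ENNReal.toReal_mul]
    simp [Real.norm_eq_abs]
  · intro x y
    have h1 := WCLF.gg_add A x y
    have h2 : (WCLF.gg A x + WCLF.gg A y) ≠ ⊤ := ENNReal.add_ne_top.mpr ⟨hfin x, hfin y⟩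
    calc (WCLF.gg A (x + y)).toReal ≤ (WCLF.gg A x + WCLF.gg A y).toReal :=
          ENNReal.toReal_mono h2 h1
      _ = (WCLF.gg A x).toReal + (WCLF.gg A y).toReal :=
          ENNReal.toReal_add (hfin x) (hfin y)
  · intro i x
    exact ENNReal.toReal_mono (hfin x) (WCLF.gg_step A i x)
end

section
/- Let A_1, …, A_M ∈ ℝ^{n×n}. If there exist a symmetric positive definite matrix P ∈ ℝ^{n×n} and η ∈ (0,1) such that for every i ∈ {1, …, M} the matrix η (AᵢᵀPAᵢ − P) + (1−η) (Aᵢ − I)ᵀ P (Aᵢ − I) is negative semidefinite, then the difference inclusion generated by A_1, …, A_M is weakly convergent. -/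
open Matrix Filter

section AuxProof
open Finset

section Abstract
variable {H : Type*} [NormedAddCommGroup H] [InnerProductSpace ℝ H]

lemma le_of_sq_le_sq' {a b : ℝ} (ha : 0 ≤ a) (hb : 0 ≤ b) (h : a ^ 2 ≤ b ^ 2) : a ≤ b := by
  nlinarith

/-- Jensen for squared norms. -/
lemma norm_sq_sum_smul_le {M : ℕ} (w : Fin M → ℝ) (hw0 : ∀ i, 0 ≤ w i)
    (hw1 : ∑ i, w i = 1) (v : Fin M → H) :
    ‖∑ i, w i • v i‖ ^ 2 ≤ ∑ i, w i * ‖v i‖ ^ 2 := by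
  have expand : ‖∑ i, w i • v i‖ ^ 2
      = ∑ i, ∑ j, w i * (w j * (inner ℝ (v i) (v j) : ℝ)) := by
    rw [← real_inner_self_eq_norm_sq, sum_inner]
    refine Finset.sum_congr rfl fun i _ => ?_
    rw [real_inner_smul_left, inner_sum, Finset.mul_sum]
    refine congrArg _ (funext fun j => ?_)
    rw [real_inner_smul_right]
  rw [expand]
  have key : ∀ i j : Fin M, w i * (w j * (inner ℝ (v i) (v j) : ℝ))
      ≤ w i * (w j * ((‖v i‖ ^ 2 + ‖v j‖ ^ 2) / 2)) := by
    intro i j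
    have h1 : (inner ℝ (v i) (v j) : ℝ) ≤ ‖v i‖ * ‖v j‖ := real_inner_le_norm _ _
    have h2 : ‖v i‖ * ‖v j‖ ≤ (‖v i‖ ^ 2 + ‖v j‖ ^ 2) / 2 := by
      nlinarith [sq_nonneg (‖v i‖ - ‖v j‖)]
    exact mul_le_mul_of_nonneg_left
      (mul_le_mul_of_nonneg_left (h1.trans h2) (hw0 j)) (hw0 i)
  calc ∑ i, ∑ j, w i * (w j * (inner ℝ (v i) (v j) : ℝ))
      ≤ ∑ i, ∑ j, w i * (w j * ((‖v i‖ ^ 2 + ‖v j‖ ^ 2) / 2)) :=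
        Finset.sum_le_sum fun i _ => Finset.sum_le_sum fun j _ => key i j
    _ = ∑ i, w i * ‖v i‖ ^ 2 := by
        have e2 : ∀ i : Fin M, ∑ j, w i * (w j * ((‖v i‖ ^ 2 + ‖v j‖ ^ 2) / 2))
            = (w i * ‖v i‖ ^ 2 * (∑ j, w j) + w i * (∑ j, w j * ‖v j‖ ^ 2)) / 2 := by
          intro i
          have e3 : ∀ j : Fin M, w i * (w j * ((‖v i‖ ^ 2 + ‖v j‖ ^ 2) / 2))
              = (w i * ‖v i‖ ^ 2 * w j + w i * (w j * ‖v j‖ ^ 2)) / 2 := fun j => by ring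
          simp only [e3]
          rw [← Finset.sum_div, Finset.sum_add_distrib, ← Finset.mul_sum, ← Finset.mul_sum]
        simp only [e2, hw1, mul_one]
        rw [← Finset.sum_div, Finset.sum_add_distrib]
        have e4 : ∑ _x : Fin M, w _x * ∑ j, w j * ‖v j‖ ^ 2
            = (∑ j, w j * ‖v j‖ ^ 2) := by
          rw [← Finset.sum_mul, hw1, one_mul]
        rw [e4]
        ring
end Abstract

section Abstract2
variable {H : Type*} [NormedAddCommGroup H] [InnerProductSpace ℝ H]

lemma averaged_product_tendsto {M : ℕ} [FiniteDimensional ℝ H]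
    (T : Fin M → H →ₗ[ℝ] H) (β : ℝ) (hβ : 0 < β)
    (hT : ∀ i v, ‖T i v‖ ^ 2 + β * ‖T i v - v‖ ^ 2 ≤ ‖v‖ ^ 2)
    (x : ℕ → H) (w : ℕ → Fin M → ℝ)
    (hw0 : ∀ k i, 0 ≤ w k i) (hw1 : ∀ k, ∑ i, w k i = 1)
    (hx : ∀ k, x (k + 1) = ∑ i, w k i • T i (x k)) :
    ∃ y, Filter.Tendsto x Filter.atTop (nhds y) := by
  classical
  haveI : ProperSpace H := FiniteDimensional.proper ℝ H
  set c : ℕ → ℝ := fun k => ∑ i, w k i * ‖T i (x k) - x k‖ ^ 2 with hc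
  have hc0 : ∀ k, 0 ≤ c k := fun k =>
    Finset.sum_nonneg fun i _ => mul_nonneg (hw0 k i) (sq_nonneg _)
  have hTle : ∀ i (v : H), ‖T i v‖ ^ 2 ≤ ‖v‖ ^ 2 := fun i v => by
    nlinarith [hT i v, sq_nonneg ‖T i v - v‖]
  have hstep : ∀ k, ‖x (k+1)‖ ^ 2 + β * c k ≤ ‖x k‖ ^ 2 := by
    intro k
    have h1 : ‖x (k+1)‖ ^ 2 ≤ ∑ i, w k i * ‖T i (x k)‖ ^ 2 := by
      rw [hx k]; exact norm_sq_sum_smul_le _ (hw0 k) (hw1 k) _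
    have h2 : ∑ i, w k i * ‖T i (x k)‖ ^ 2
        ≤ ∑ i, w k i * (‖x k‖ ^ 2 - β * ‖T i (x k) - x k‖ ^ 2) :=
      Finset.sum_le_sum fun i _ => mul_le_mul_of_nonneg_left
        (by nlinarith [hT i (x k)]) (hw0 k i)
    have h3 : ∑ i, w k i * (‖x k‖ ^ 2 - β * ‖T i (x k) - x k‖ ^ 2)
        = ‖x k‖ ^ 2 - β * c k := by
      simp only [mul_sub]
      rw [Finset.sum_sub_distrib, ← Finset.sum_mul, hw1 k, one_mul, hc]
      rw [Finset.mul_sum]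
      congr 1
      exact Finset.sum_congr rfl fun i _ => by ring
    linarith [h1.trans (h2.trans_eq h3)]
  have hmono : Antitone (fun k => ‖x k‖ ^ 2) := antitone_nat_of_succ_le fun k => by
    have := hstep k
    have := hc0 k
    nlinarith
  have hnormle : ∀ k, ‖x k‖ ≤ ‖x 0‖ := fun k =>
    le_of_sq_le_sq' (norm_nonneg _) (norm_nonneg _) (hmono (Nat.zero_le k))
  have hpartial : ∀ K, ∑ k ∈ Finset.range K, c k ≤ ‖x 0‖ ^ 2 / β := by
    intro K
    have hb : β * ∑ k ∈ Finset.range K, c k ≤ ‖x 0‖ ^ 2 - ‖x K‖ ^ 2 := by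
      induction K with
      | zero => simp
      | succ K ih =>
        rw [Finset.sum_range_succ, mul_add]
        have := hstep K
        linarith
    rw [le_div_iff₀ hβ]
    nlinarith [sq_nonneg ‖x K‖]
  have hsum : Summable c := summable_of_sum_range_le hc0 hpartial
  obtain ⟨y, -, φ, hφ, hxy⟩ := tendsto_subseq_of_bounded
    (Metric.isBounded_closedBall (x := (0:H)) (r := ‖x 0‖))
    (fun k => by simpa [Metric.mem_closedBall, dist_zero_right] using hnormle k)
  have hcontr : ∀ k (v : H), ‖∑ i, w k i • T i v‖ ≤ ‖v‖ := by
    intro k v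
    have h1 : ‖∑ i, w k i • T i v‖ ^ 2 ≤ ∑ i, w k i * ‖T i v‖ ^ 2 :=
      norm_sq_sum_smul_le _ (hw0 k) (hw1 k) _
    have h2 : ∑ i, w k i * ‖T i v‖ ^ 2 ≤ ∑ i, w k i * ‖v‖ ^ 2 :=
      Finset.sum_le_sum fun i _ => mul_le_mul_of_nonneg_left (hTle i v) (hw0 k i)
    have h3 : ∑ i, w k i * ‖v‖ ^ 2 = ‖v‖ ^ 2 := by
      rw [← Finset.sum_mul, hw1 k, one_mul]
    exact le_of_sq_le_sq' (norm_nonneg _) (norm_nonneg _) (by linarith)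
  have hdecomp : ∀ k, x (k+1) - y
      = (∑ i, w k i • T i (x k - y)) + ∑ i, w k i • (T i y - y) := by
    intro k
    rw [hx k, ← Finset.sum_add_distrib]
    have e1 : ∀ i : Fin M, w k i • T i (x k - y) + w k i • (T i y - y)
        = w k i • T i (x k) - w k i • y := by
      intro i
      rw [map_sub, ← smul_add]
      have e2 : (T i (x k) - T i y) + (T i y - y) = T i (x k) - y := by abel
      rw [e2, smul_sub]
    simp only [e1]
    rw [Finset.sum_sub_distrib, ← Finset.sum_smul, hw1 k, one_smul]
  have hkey : ∃ Φ ρ : ℝ, 0 ≤ Φ ∧ 0 < ρ ∧ ∀ k, ‖x k - y‖ ≤ ρ →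
      ‖∑ i, w k i • (T i y - y)‖ ≤ Φ * c k := by
    by_cases hD : ∀ i, T i y = y
    · refine ⟨0, 1, le_refl _, one_pos, fun k _ => ?_⟩
      simp [hD]
    · push_neg at hD
      obtain ⟨i₀, hi₀⟩ := hD
      set D : Finset (Fin M) := Finset.univ.filter (fun i => T i y ≠ y) with hDdef
      have hDne : D.Nonempty := ⟨i₀, by simp [hDdef, hi₀]⟩
      set δ : ℝ := D.inf' hDne (fun i => ‖T i y - y‖) with hδdef
      have hδpos : 0 < δ := by
        rw [hδdef, Finset.lt_inf'_iff]
        intro i hi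
        rw [hDdef, Finset.mem_filter] at hi
        exact norm_pos_iff.mpr (sub_ne_zero.mpr hi.2)
      set G : Fin M → H →L[ℝ] H :=
        fun i => LinearMap.toContinuousLinearMap (T i - LinearMap.id) with hGdef
      have hGapp : ∀ (i : Fin M) (v : H), G i v = T i v - v := by
        intro i v
        rw [hGdef]
        simp [LinearMap.coe_toContinuousLinearMap', LinearMap.sub_apply]
      set L : ℝ := D.sup' hDne (fun i => ‖G i‖) with hLdef
      have hL0 : 0 ≤ L := le_trans (norm_nonneg _)
        (Finset.le_sup' (fun i => ‖G i‖) hDne.choose_spec)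
      set ρ : ℝ := δ / (2 * (L + 1)) with hρdef
      have hρpos : 0 < ρ := div_pos hδpos (by linarith)
      refine ⟨4 / δ, ρ, by positivity, hρpos, fun k hk => ?_⟩
      have hterm : ∀ i : Fin M, w k i * ‖T i y - y‖
          ≤ 4 / δ * (w k i * ‖T i (x k) - x k‖ ^ 2) := by
        intro i
        by_cases hi : T i y = y
        · rw [hi, sub_self, norm_zero, mul_zero]
          exact mul_nonneg (div_nonneg (by norm_num) hδpos.le)
            (mul_nonneg (hw0 k i) (sq_nonneg _))
        · have hiD : i ∈ D := by simp [hDdef, hi]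
          have hδi : δ ≤ ‖T i y - y‖ := Finset.inf'_le _ hiD
          have hLi : ‖G i‖ ≤ L := Finset.le_sup' (fun i => ‖G i‖) hiD
          have hib : ‖(T i (x k) - x k) - (T i y - y)‖ ≤ L * ρ := by
            have e3 : (T i (x k) - x k) - (T i y - y) = G i (x k - y) := by
              rw [hGapp i (x k - y), map_sub]
              abel
            rw [e3]
            calc ‖G i (x k - y)‖ ≤ ‖G i‖ * ‖x k - y‖ := ContinuousLinearMap.le_opNorm _ _
              _ ≤ L * ρ := mul_le_mul hLi hk (norm_nonneg _) hL0
          have hLρ : L * ρ ≤ δ / 2 := by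
            rw [hρdef, ← mul_div_assoc, div_le_div_iff₀ (by linarith) (by norm_num)]
            nlinarith
          have hlow : ‖T i y - y‖ / 2 ≤ ‖T i (x k) - x k‖ := by
            have := norm_sub_norm_le (T i (x k) - x k) (T i y - y)
            have h4 : ‖T i y - y‖ - ‖T i (x k) - x k‖ ≤ δ / 2 := by
              have := abs_norm_sub_norm_le (T i (x k) - x k) (T i y - y)
              have : ‖T i y - y‖ - ‖T i (x k) - x k‖ ≤ ‖(T i (x k) - x k) - (T i y - y)‖ := by
                have := abs_le.mp (abs_norm_sub_norm_le (T i (x k) - x k) (T i y - y))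
                linarith [this.1]
              linarith [hib, hLρ]
            linarith [hδi]
          have hnn : 0 ≤ ‖T i (x k) - x k‖ := norm_nonneg _
          have hsq : ‖T i y - y‖ * δ / 4 ≤ ‖T i (x k) - x k‖ ^ 2 := by
            have h5 : ‖T i y - y‖ / 2 * (δ / 2) ≤ ‖T i (x k) - x k‖ ^ 2 := by
              have h6 : δ / 2 ≤ ‖T i (x k) - x k‖ := by
                calc δ / 2 ≤ ‖T i y - y‖ / 2 := by linarith
                  _ ≤ _ := hlow
              nlinarith [hlow, h6]
            nlinarith
          have hw' := hw0 k i
          have h7 : ‖T i y - y‖ ≤ 4 / δ * ‖T i (x k) - x k‖ ^ 2 := by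
            rw [div_mul_eq_mul_div, le_div_iff₀ hδpos]
            nlinarith
          calc w k i * ‖T i y - y‖ ≤ w k i * (4 / δ * ‖T i (x k) - x k‖ ^ 2) :=
                mul_le_mul_of_nonneg_left h7 hw'
            _ = 4 / δ * (w k i * ‖T i (x k) - x k‖ ^ 2) := by ring
      calc ‖∑ i, w k i • (T i y - y)‖ ≤ ∑ i, ‖w k i • (T i y - y)‖ :=
            norm_sum_le _ _
        _ = ∑ i, w k i * ‖T i y - y‖ := by
            refine Finset.sum_congr rfl fun i _ => ?_
            rw [norm_smul, Real.norm_eq_abs, abs_of_nonneg (hw0 k i)]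
        _ ≤ ∑ i, 4 / δ * (w k i * ‖T i (x k) - x k‖ ^ 2) :=
            Finset.sum_le_sum fun i _ => hterm i
        _ = 4 / δ * c k := by rw [hc, ← Finset.mul_sum]
  obtain ⟨Φ, ρ, hΦ0, hρ0, hΦ⟩ := hkey
  refine ⟨y, Metric.tendsto_atTop.mpr fun ε hε => ?_⟩
  set ε' : ℝ := min ε ρ with hε'def
  have hε'0 : 0 < ε' := lt_min hε hρ0
  set ε₀ : ℝ := ε' / (2 * (Φ + 1)) with hε₀def
  have hε₀ : 0 < ε₀ := div_pos hε'0 (by linarith)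
  have hΦε₀ : Φ * ε₀ ≤ ε' / 2 := by
    rw [hε₀def, ← mul_div_assoc, div_le_div_iff₀ (by linarith) (by norm_num)]
    nlinarith [hε'0.le, hΦ0]
  have hS : Filter.Tendsto (fun n => ∑ k ∈ Finset.range n, c k) Filter.atTop
      (nhds (∑' k, c k)) := hsum.hasSum.tendsto_sum_nat
  obtain ⟨K₁, hK₁⟩ := (Metric.tendsto_atTop.mp hS ε₀ hε₀)
  have htail : ∀ k, K₁ ≤ k → ∑ m ∈ Finset.Ico K₁ k, c m < ε₀ := by
    intro k hk
    rw [Finset.sum_Ico_eq_sub _ hk]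
    have h8 : ∑ m ∈ Finset.range k, c m ≤ ∑' m, c m :=
      Summable.sum_le_tsum _ (fun i _ => hc0 i) hsum
    have h9 := hK₁ K₁ le_rfl
    rw [Real.dist_eq, abs_lt] at h9
    linarith [h9.1]
  have hhalf : 0 < ε' / 2 := by linarith
  obtain ⟨j₀, hj₀⟩ := Metric.tendsto_atTop.mp hxy (ε' / 2) hhalf
  set j : ℕ := max j₀ K₁ with hjdef
  set K : ℕ := φ j with hKdef
  have hKK₁ : K₁ ≤ K := le_trans (le_max_right _ _) (hφ.le_apply)
  have hK : ‖x K - y‖ < ε' / 2 := by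
    have := hj₀ j (le_max_left _ _)
    rwa [Function.comp_apply, dist_eq_norm] at this
  have main : ∀ m : ℕ, ‖x (K + m) - y‖ ≤ ε' / 2 + Φ * ∑ t ∈ Finset.Ico K (K + m), c t := by
    intro m
    induction m with
    | zero => simpa using hK.le
    | succ m ih =>
      have hsub : ∑ t ∈ Finset.Ico K (K + m), c t < ε₀ := by
        calc ∑ t ∈ Finset.Ico K (K + m), c t ≤ ∑ t ∈ Finset.Ico K₁ (K + m), c t :=
              Finset.sum_le_sum_of_subset_of_nonneg
                (Finset.Ico_subset_Ico hKK₁ le_rfl) (fun i _ _ => hc0 i)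
          _ < ε₀ := htail _ (le_trans hKK₁ (Nat.le_add_right _ _))
      have hball : ‖x (K + m) - y‖ ≤ ρ := by
        have : ‖x (K + m) - y‖ ≤ ε' / 2 + Φ * ε₀ :=
          ih.trans (by nlinarith [mul_le_mul_of_nonneg_left hsub.le hΦ0])
        have : ‖x (K + m) - y‖ ≤ ε' := by linarith
        exact this.trans (min_le_right _ _)
      have hstep2 : ‖x (K + m + 1) - y‖ ≤ ‖x (K + m) - y‖ + Φ * c (K + m) := by
        rw [hdecomp (K + m)]
        calc ‖(∑ i, w (K+m) i • T i (x (K+m) - y)) + ∑ i, w (K+m) i • (T i y - y)‖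
            ≤ ‖∑ i, w (K+m) i • T i (x (K+m) - y)‖ + ‖∑ i, w (K+m) i • (T i y - y)‖ :=
              norm_add_le _ _
          _ ≤ ‖x (K+m) - y‖ + Φ * c (K+m) :=
              add_le_add (hcontr _ _) (hΦ _ hball)
      have hIco : ∑ t ∈ Finset.Ico K (K + m + 1), c t
          = ∑ t ∈ Finset.Ico K (K + m), c t + c (K + m) :=
        Finset.sum_Ico_succ_top (Nat.le_add_right _ _) _
      show ‖x (K + m + 1) - y‖ ≤ ε' / 2 + Φ * ∑ t ∈ Finset.Ico K (K + m + 1), c t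
      rw [hIco]
      linarith [hstep2, ih]
  refine ⟨K, fun k hk => ?_⟩
  obtain ⟨m, rfl⟩ := Nat.exists_eq_add_of_le hk
  have h10 := main m
  have hsub : ∑ t ∈ Finset.Ico K (K + m), c t < ε₀ := by
    calc ∑ t ∈ Finset.Ico K (K + m), c t ≤ ∑ t ∈ Finset.Ico K₁ (K + m), c t :=
          Finset.sum_le_sum_of_subset_of_nonneg
            (Finset.Ico_subset_Ico hKK₁ le_rfl) (fun i _ _ => hc0 i)
      _ < ε₀ := htail _ (le_trans hKK₁ (Nat.le_add_right _ _))
  have hΦsub : Φ * ∑ t ∈ Finset.Ico K (K + m), c t ≤ Φ * ε₀ :=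
    mul_le_mul_of_nonneg_left hsub.le hΦ0
  rw [dist_eq_norm]
  have hfin : ‖x (K + m) - y‖ < ε' := by
    rcases eq_or_lt_of_le hΦ0 with h0 | h0
    · rw [← h0] at h10
      simp only [zero_mul] at h10
      linarith
    · have : Φ * ∑ t ∈ Finset.Ico K (K + m), c t < Φ * ε₀ :=
        mul_lt_mul_of_pos_left hsub h0
      linarith
  exact lt_of_lt_of_le hfin (min_le_left _ _)

end Abstract2

section Concrete
open Matrix Filter

/-- Type synonym for `Fin n → ℝ`, carrying no instances, on which we install the
`P`-inner-product structure. -/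
def PiP (n : ℕ) : Type := Fin n → ℝ

def toP {n : ℕ} (v : Fin n → ℝ) : PiP n := v
def ofP {n : ℕ} (v : PiP n) : Fin n → ℝ := v

lemma sum_smul_mulVec {n M : ℕ} (c : Fin M → ℝ) (A : Fin M → Matrix (Fin n) (Fin n) ℝ)
    (v : Fin n → ℝ) :
    (∑ i, c i • A i) *ᵥ v = ∑ i, c i • (A i *ᵥ v) := by
  let φ : Matrix (Fin n) (Fin n) ℝ →+ (Fin n → ℝ) :=
    { toFun := fun B => B *ᵥ v
      map_zero' := Matrix.zero_mulVec v
      map_add' := fun B C => Matrix.add_mulVec B C v }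
  have h := map_sum φ (fun i => c i • A i) Finset.univ
  simp only [φ, AddMonoidHom.coe_mk, ZeroHom.coe_mk] at h
  rw [h]
  exact Finset.sum_congr rfl fun i _ => Matrix.smul_mulVec (c i) (A i) v

lemma lmi_aux (n M : ℕ) (A : Fin M → Matrix (Fin n) (Fin n) ℝ)
    (P : Matrix (Fin n) (Fin n) ℝ) (hP : P.PosDef)
    (η : ℝ) (hη0 : 0 < η) (hη1 : η < 1)
    (hLMI : ∀ i, (-(η • ((A i)ᵀ * P * (A i) - P) +
        (1 - η) • ((A i - 1)ᵀ * P * (A i - 1)))).PosSemidef)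
    (x : ℕ → Fin n → ℝ) (w : ℕ → Fin M → ℝ)
    (hw0 : ∀ k i, 0 ≤ w k i) (hw1 : ∀ k, ∑ i, w k i = 1)
    (hx : ∀ k, x (k + 1) = (∑ i, w k i • A i) *ᵥ (x k)) :
    ∃ y : Fin n → ℝ, ∀ j, Tendsto (fun k => x k j) atTop (nhds (y j)) := by
  letI : NormedAddCommGroup (PiP n) := Matrix.toNormedAddCommGroup P hP
  letI : InnerProductSpace ℝ (PiP n) := Matrix.toInnerProductSpace P hP.posSemidef
  letI : FiniteDimensional ℝ (PiP n) := by
    exact Module.Finite.of_surjective (M := Fin n → ℝ) (σ := RingHom.id ℝ)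
      { toFun := toP
        map_add' := fun _ _ => rfl
        map_smul' := fun _ _ => rfl }
      (fun v => ⟨ofP v, rfl⟩)
  have hnorm : ∀ u : PiP n, ‖u‖ ^ 2 = ofP u ⬝ᵥ (P *ᵥ ofP u) := by
    intro u
    rw [← real_inner_self_eq_norm_sq]
    show dotProduct (P *ᵥ ofP u) (star (ofP u)) = _
    rw [star_trivial, dotProduct_comm]
  have hquad : ∀ (B : Matrix (Fin n) (Fin n) ℝ) (v : Fin n → ℝ),
      v ⬝ᵥ ((Bᵀ * P * B) *ᵥ v) = (B *ᵥ v) ⬝ᵥ (P *ᵥ (B *ᵥ v)) := by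
    intro B v
    rw [Matrix.mul_assoc, ← Matrix.mulVec_mulVec, ← Matrix.mulVec_mulVec,
      Matrix.dotProduct_mulVec v Bᵀ, Matrix.vecMul_transpose]
  set β : ℝ := (1 - η) / η with hβdef
  have hβ : 0 < β := div_pos (by linarith) hη0
  set T : Fin M → PiP n →ₗ[ℝ] PiP n := fun i =>
    { toFun := fun v => toP (A i *ᵥ ofP v)
      map_add' := fun u v => show toP (A i *ᵥ (ofP u + ofP v))
          = toP (A i *ᵥ ofP u + A i *ᵥ ofP v) from
        congrArg toP (Matrix.mulVec_add (A i) (ofP u) (ofP v))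
      map_smul' := fun r v => show toP (A i *ᵥ (r • ofP v))
          = toP (r • (A i *ᵥ ofP v)) from
        congrArg toP (Matrix.mulVec_smul (A i) r (ofP v)) } with hTdef
  have hTapp : ∀ (i : Fin M) (v : PiP n), T i v = toP (A i *ᵥ ofP v) := fun i v => rfl
  have hsubP : ∀ u v : PiP n, ofP (u - v) = ofP u - ofP v := fun u v => rfl
  have hTineq : ∀ (i : Fin M) (v : PiP n), ‖T i v‖ ^ 2 + β * ‖T i v - v‖ ^ 2 ≤ ‖v‖ ^ 2 := by
    intro i v
    set v' : Fin n → ℝ := ofP v with hv'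
    have h0 := (hLMI i).dotProduct_mulVec_nonneg v'
    rw [star_trivial] at h0
    have e1 : (-(η • ((A i)ᵀ * P * (A i) - P) +
        (1 - η) • ((A i - 1)ᵀ * P * (A i - 1)))) *ᵥ v'
        = -(η • ((((A i)ᵀ * P * (A i)) *ᵥ v') - P *ᵥ v')
            + (1 - η) • (((A i - 1)ᵀ * P * (A i - 1)) *ᵥ v')) := by
      rw [Matrix.neg_mulVec, Matrix.add_mulVec, Matrix.smul_mulVec,
        Matrix.smul_mulVec, Matrix.sub_mulVec]
    rw [e1, dotProduct_neg, dotProduct_add, dotProduct_smul, dotProduct_smul,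
      dotProduct_sub, hquad, hquad, smul_eq_mul, smul_eq_mul] at h0
    have hBv : (A i - 1) *ᵥ v' = A i *ᵥ v' - v' := by
      rw [Matrix.sub_mulVec, Matrix.one_mulVec]
    rw [hBv] at h0
    have hq1 : ‖T i v‖ ^ 2 = (A i *ᵥ v') ⬝ᵥ (P *ᵥ (A i *ᵥ v')) := by
      rw [hTapp, hnorm]; rfl
    have hq2 : ‖T i v - v‖ ^ 2 = (A i *ᵥ v' - v') ⬝ᵥ (P *ᵥ (A i *ᵥ v' - v')) := by
      rw [hnorm, hsubP, hTapp]; rfl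
    have hq3 : ‖v‖ ^ 2 = v' ⬝ᵥ (P *ᵥ v') := hnorm v
    rw [hq1, hq2, hq3, hβdef, div_mul_eq_mul_div, add_comm, ← le_sub_iff_add_le,
      div_le_iff₀ hη0]
    nlinarith [h0]
  have hxstep : ∀ k, toP (x (k+1)) = ∑ i, w k i • T i (toP (x k)) := by
    intro k
    have h1 := hx k
    rw [sum_smul_mulVec] at h1
    show toP (x (k+1)) = toP (ofP (∑ i, w k i • T i (toP (x k))))
    rw [h1]
    congr 1
  obtain ⟨y, hy⟩ := averaged_product_tendsto T β hβ hTineq (fun k => toP (x k))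
    w hw0 hw1 hxstep
  refine ⟨ofP y, fun j => ?_⟩
  let opl : PiP n →ₗ[ℝ] (Fin n → ℝ) :=
    { toFun := ofP
      map_add' := fun _ _ => rfl
      map_smul' := fun _ _ => rfl }
  have hproj : Continuous (fun v : PiP n => ofP v j) := by
    have h2 : Continuous ⇑((LinearMap.proj j : (Fin n → ℝ) →ₗ[ℝ] ℝ).comp opl) :=
      LinearMap.continuous_of_finiteDimensional _
    exact h2
  exact (hproj.tendsto y).comp hy

end Concrete

end AuxProof

/-- if there exist `P ≻ 0` and `η ∈ (0,1)` such that
`η(AᵢᵀPAᵢ − P) + (1−η)(Aᵢ−I)ᵀP(Aᵢ−I) ⪯ 0` for all `i`, then the difference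
inclusion is weakly convergent. -/
theorem lmi_implies_weak_convergence
    (n M : ℕ) (A : Fin M → Matrix (Fin n) (Fin n) ℝ)
    (P : Matrix (Fin n) (Fin n) ℝ) (hP : P.PosDef)
    (η : ℝ) (hη0 : 0 < η) (hη1 : η < 1)
    (hLMI : ∀ i, (-(η • ((A i)ᵀ * P * (A i) - P) +
        (1 - η) • ((A i - 1)ᵀ * P * (A i - 1)))).PosSemidef) :
    WeaklyConvergent A := by
  intro x hxsol
  obtain ⟨w, hw, hstep⟩ := hxsol
  obtain ⟨y, hy⟩ := lmi_aux n M A P hP η hη0 hη1 hLMI x w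
    (fun k => (hw k).1) (fun k => (hw k).2) (fun k => hstep k)
  exact ⟨y, tendsto_pi_nhds.mpr hy⟩
end

section
/- Suppose the difference inclusion generated by matrices A_1, …, A_M ∈ ℝ^{n×n} admits a weak quadratic Lyapunov function, i.e., there exists a symmetric positive definite matrix P ∈ ℝ^{n×n} such that AᵢᵀPAᵢ − P is negative semidefinite for every i ∈ {1, …, M}. Then the inclusion generated by A_1, …, A_M is strongly convergent if and only if the dual inclusion generated by the transposed matrices A_1ᵀ, …, A_Mᵀ is strongly convergent (with respect to X̄ᵀ := ⋂ᵢ ker(Aᵢᵀ − I)). -/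
open Matrix Filter

namespace SCD

variable {n M : ℕ}

/-- squared Euclidean norm -/
def n2 {n : ℕ} (x : Fin n → ℝ) : ℝ := x ⬝ᵥ x

lemma n2_nonneg (x : Fin n → ℝ) : 0 ≤ n2 x := by
  unfold n2 dotProduct
  exact Finset.sum_nonneg fun i _ => mul_self_nonneg _

lemma eq_zero_of_n2_nonpos {x : Fin n → ℝ} (h : n2 x ≤ 0) : x = 0 := by
  have h0 : n2 x = 0 := le_antisymm h (n2_nonneg x)
  funext i
  have h1 := (Finset.sum_eq_zero_iff_of_nonneg
    (fun j (_ : j ∈ Finset.univ) => mul_self_nonneg (x j))).1 h0 i (Finset.mem_univ i)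
  simpa using mul_self_eq_zero.mp h1

lemma dot_sq_le_n2_mul_n2 (x y : Fin n → ℝ) : (x ⬝ᵥ y)^2 ≤ n2 x * n2 y := by
  have := Finset.sum_mul_sq_le_sq_mul_sq Finset.univ x y
  simpa [n2, dotProduct, pow_two] using this

lemma dot_le_of_n2_le {x y : Fin n → ℝ} {c : ℝ} (hx : n2 x ≤ c) (hy : n2 y ≤ c) :
    x ⬝ᵥ y ≤ c := by
  have h0 : 0 ≤ c := le_trans (n2_nonneg x) hx
  have h1 := dot_sq_le_n2_mul_n2 x y
  nlinarith [n2_nonneg x, n2_nonneg y]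

lemma n2_sub (u v : Fin n → ℝ) : n2 (u - v) = n2 u - 2 * (u ⬝ᵥ v) + n2 v := by
  simp only [n2, dotProduct, Pi.sub_apply]
  rw [Finset.mul_sum, ← Finset.sum_sub_distrib, ← Finset.sum_add_distrib]
  exact Finset.sum_congr rfl fun i _ => by ring

lemma n2_add_le (u v : Fin n → ℝ) : n2 (u + v) ≤ 2 * n2 u + 2 * n2 v := by
  simp only [n2, dotProduct, Pi.add_apply]
  rw [Finset.mul_sum, Finset.mul_sum, ← Finset.sum_add_distrib]
  exact Finset.sum_le_sum fun i _ => by nlinarith [sq_nonneg (u i - v i)]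

end SCD

namespace SCD

variable {n M : ℕ}

lemma eq_of_mulVec_eq {M1 M2 : Matrix (Fin n) (Fin n) ℝ}
    (h : ∀ x, M1 *ᵥ x = M2 *ᵥ x) : M1 = M2 := by
  ext a b
  have := congrFun (h (Pi.single b 1)) a
  simpa [Matrix.mulVec, dotProduct_single] using this

lemma sum_dotProduct' {ι : Type*} (s : Finset ι) (f : ι → Fin n → ℝ) (y : Fin n → ℝ) :
    (∑ i ∈ s, f i) ⬝ᵥ y = ∑ i ∈ s, f i ⬝ᵥ y := by
  unfold dotProduct
  simp only [Finset.sum_apply, Finset.sum_mul]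
  exact Finset.sum_comm

lemma dotProduct_sum' {ι : Type*} (s : Finset ι) (y : Fin n → ℝ) (f : ι → Fin n → ℝ) :
    y ⬝ᵥ (∑ i ∈ s, f i) = ∑ i ∈ s, y ⬝ᵥ f i := by
  rw [dotProduct_comm, sum_dotProduct']
  exact Finset.sum_congr rfl fun i _ => dotProduct_comm _ _

lemma amix_mulVec (A : Fin M → Matrix (Fin n) (Fin n) ℝ) (w : Fin M → ℝ) (x : Fin n → ℝ) :
    Amix A w *ᵥ x = ∑ i, w i • (A i *ᵥ x) := by
  funext a
  simp only [Amix, Matrix.mulVec, dotProduct, Matrix.sum_apply, Matrix.smul_apply,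
    Finset.sum_apply, Pi.smul_apply, smul_eq_mul, Finset.sum_mul, Finset.mul_sum]
  rw [Finset.sum_comm]
  exact Finset.sum_congr rfl fun i _ => Finset.sum_congr rfl fun c _ => by ring

lemma n2_amix_le {A : Fin M → Matrix (Fin n) (Fin n) ℝ}
    (hC : ∀ i x, n2 (A i *ᵥ x) ≤ n2 x) {w : Fin M → ℝ} (hw : InSimplex w) (x : Fin n → ℝ) :
    n2 (Amix A w *ᵥ x) ≤ n2 x := by
  rw [amix_mulVec]
  have key : ∀ i j, (A i *ᵥ x) ⬝ᵥ (A j *ᵥ x) ≤ n2 x :=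
    fun i j => dot_le_of_n2_le (hC i x) (hC j x)
  have expand : n2 (∑ i, w i • (A i *ᵥ x))
      = ∑ i, ∑ j, (w i * w j) * ((A i *ᵥ x) ⬝ᵥ (A j *ᵥ x)) := by
    unfold n2
    rw [sum_dotProduct']
    refine Finset.sum_congr rfl fun i _ => ?_
    rw [smul_dotProduct, dotProduct_sum', Finset.smul_sum]
    refine Finset.sum_congr rfl fun j _ => ?_
    rw [dotProduct_smul]
    simp only [smul_eq_mul]; ring
  rw [expand]
  calc ∑ i, ∑ j, (w i * w j) * ((A i *ᵥ x) ⬝ᵥ (A j *ᵥ x))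
      ≤ ∑ i, ∑ j, (w i * w j) * n2 x := by
        refine Finset.sum_le_sum fun i _ => Finset.sum_le_sum fun j _ => ?_
        exact mul_le_mul_of_nonneg_left (key i j) (mul_nonneg (hw.1 i) (hw.1 j))
    _ = n2 x := by
        have hj : ∀ i : Fin M, ∑ j, (w i * w j) * n2 x = w i * n2 x := by
          intro i
          have : ∀ j : Fin M, (w i * w j) * n2 x = w j * (w i * n2 x) := fun j => by ring
          simp_rw [this]
          rw [← Finset.sum_mul, hw.2, one_mul]
        simp_rw [hj]
        rw [← Finset.sum_mul, hw.2, one_mul]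

lemma n2_transpose_le {B : Matrix (Fin n) (Fin n) ℝ}
    (hB : ∀ x, n2 (B *ᵥ x) ≤ n2 x) (x : Fin n → ℝ) : n2 (Bᵀ *ᵥ x) ≤ n2 x := by
  have ha : n2 (Bᵀ *ᵥ x) = (B *ᵥ (Bᵀ *ᵥ x)) ⬝ᵥ x := by
    unfold n2
    rw [Matrix.dotProduct_mulVec, Matrix.vecMul_transpose]
  have h1 : n2 (B *ᵥ (Bᵀ *ᵥ x)) ≤ n2 (Bᵀ *ᵥ x) := hB _
  have h2 := dot_sq_le_n2_mul_n2 (B *ᵥ (Bᵀ *ᵥ x)) x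
  nlinarith [n2_nonneg (Bᵀ *ᵥ x), n2_nonneg x, n2_nonneg (B *ᵥ (Bᵀ *ᵥ x))]

lemma transpose_fixed {B : Matrix (Fin n) (Fin n) ℝ}
    (hB : ∀ x, n2 (B *ᵥ x) ≤ n2 x) {z : Fin n → ℝ} (hz : B *ᵥ z = z) : Bᵀ *ᵥ z = z := by
  have hdot : (Bᵀ *ᵥ z) ⬝ᵥ z = n2 z := by
    rw [dotProduct_comm, Matrix.dotProduct_mulVec, Matrix.vecMul_transpose, hz]
    rfl
  have hn : n2 (Bᵀ *ᵥ z) ≤ n2 z := n2_transpose_le hB z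
  have h1 : n2 (Bᵀ *ᵥ z - z) ≤ 0 := by
    rw [n2_sub, hdot]; linarith
  have := eq_zero_of_n2_nonpos h1
  rwa [sub_eq_zero] at this

end SCD

namespace SCD

variable {n M : ℕ}

/-- backward products: `bwd A v t = A(v (t-1)) ⋯ A(v 0)` -/
def bwd (A : Fin M → Matrix (Fin n) (Fin n) ℝ) (v : ℕ → Fin M → ℝ) : ℕ → Matrix (Fin n) (Fin n) ℝ
  | 0 => 1
  | t + 1 => Amix A (v t) * bwd A v t

/-- forward products: `fwd A w k = A(w 0) ⋯ A(w (k-1))` -/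
def fwd (A : Fin M → Matrix (Fin n) (Fin n) ℝ) (w : ℕ → Fin M → ℝ) : ℕ → Matrix (Fin n) (Fin n) ℝ
  | 0 => 1
  | k + 1 => fwd A w k * Amix A (w k)

lemma bwd_zero {A : Fin M → Matrix (Fin n) (Fin n) ℝ} {v : ℕ → Fin M → ℝ} :
    bwd A v 0 = 1 := rfl

lemma bwd_succ {A : Fin M → Matrix (Fin n) (Fin n) ℝ} {v : ℕ → Fin M → ℝ} (t : ℕ) :
    bwd A v (t + 1) = Amix A (v t) * bwd A v t := rfl

lemma fwd_zero {A : Fin M → Matrix (Fin n) (Fin n) ℝ} {w : ℕ → Fin M → ℝ} :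
    fwd A w 0 = 1 := rfl

lemma fwd_succ {A : Fin M → Matrix (Fin n) (Fin n) ℝ} {w : ℕ → Fin M → ℝ} (k : ℕ) :
    fwd A w (k + 1) = fwd A w k * Amix A (w k) := rfl

lemma bwd_congr {A : Fin M → Matrix (Fin n) (Fin n) ℝ} {v v' : ℕ → Fin M → ℝ} :
    ∀ {t : ℕ}, (∀ i < t, v i = v' i) → bwd A v t = bwd A v' t
  | 0, _ => rfl
  | t + 1, h => by
      rw [bwd, bwd, bwd_congr (fun i hi => h i (Nat.lt_succ_of_lt hi)),
        h t (Nat.lt_succ_self t)]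

lemma fwd_decomp {A : Fin M → Matrix (Fin n) (Fin n) ℝ} {w : ℕ → Fin M → ℝ} :
    ∀ {t m : ℕ}, t ≤ m → fwd A w m = fwd A w (m - t) * bwd A (fun i => w (m - 1 - i)) t
  | 0, m, _ => by rw [Nat.sub_zero, bwd, mul_one]
  | t + 1, m, h => by
      have ht : t ≤ m := Nat.le_of_succ_le h
      have h1 : 0 < m - t := Nat.sub_pos_of_lt h
      have h2 : m - t = (m - (t + 1)) + 1 := by omega
      rw [fwd_decomp ht, h2, fwd, bwd]
      have h3 : m - (t + 1) = m - 1 - t := by omega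
      rw [h3, mul_assoc]

lemma amix_mul_of_fix {A : Fin M → Matrix (Fin n) (Fin n) ℝ} {Q : Matrix (Fin n) (Fin n) ℝ}
    (hQ : ∀ i, A i * Q = Q) {w : Fin M → ℝ} (hw : InSimplex w) : Amix A w * Q = Q := by
  unfold Amix
  rw [Finset.sum_mul]
  have : ∀ i : Fin M, (w i • A i) * Q = w i • Q := fun i => by
    rw [Matrix.smul_mul, hQ i]
  simp_rw [this, ← Finset.sum_smul, hw.2, one_smul]

lemma fwd_mul_of_fix {A : Fin M → Matrix (Fin n) (Fin n) ℝ} {Q : Matrix (Fin n) (Fin n) ℝ}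
    (hQ : ∀ i, A i * Q = Q) {w : ℕ → Fin M → ℝ} (hw : ∀ k, InSimplex (w k)) :
    ∀ k, fwd A w k * Q = Q
  | 0 => by rw [fwd, one_mul]
  | k + 1 => by rw [fwd, mul_assoc, amix_mul_of_fix hQ (hw k), fwd_mul_of_fix hQ hw k]

lemma bwd_fixes {A : Fin M → Matrix (Fin n) (Fin n) ℝ} {z : Fin n → ℝ}
    (hz : ∀ i, A i *ᵥ z = z) {v : ℕ → Fin M → ℝ} (hv : ∀ k, InSimplex (v k)) :
    ∀ t, bwd A v t *ᵥ z = z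
  | 0 => Matrix.one_mulVec z
  | t + 1 => by
      rw [bwd, ← Matrix.mulVec_mulVec, bwd_fixes hz hv t, amix_mulVec]
      simp_rw [hz]
      rw [← Finset.sum_smul, (hv t).2, one_smul]

lemma n2_fwd_le {A : Fin M → Matrix (Fin n) (Fin n) ℝ}
    (hC : ∀ i x, n2 (A i *ᵥ x) ≤ n2 x) {w : ℕ → Fin M → ℝ} (hw : ∀ k, InSimplex (w k)) :
    ∀ k x, n2 (fwd A w k *ᵥ x) ≤ n2 x
  | 0, x => by rw [fwd, Matrix.one_mulVec]
  | k + 1, x => by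
      rw [fwd, ← Matrix.mulVec_mulVec]
      exact le_trans (n2_fwd_le hC hw k _) (n2_amix_le hC (hw k) x)

lemma n2_bwd_le {A : Fin M → Matrix (Fin n) (Fin n) ℝ}
    (hC : ∀ i x, n2 (A i *ᵥ x) ≤ n2 x) {v : ℕ → Fin M → ℝ} (hv : ∀ k, InSimplex (v k)) :
    ∀ t x, n2 (bwd A v t *ᵥ x) ≤ n2 x
  | 0, x => by rw [bwd, Matrix.one_mulVec]
  | t + 1, x => by
      rw [bwd, ← Matrix.mulVec_mulVec]
      exact le_trans (n2_amix_le hC (hv t) _) (n2_bwd_le hC hv t x)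

/-- the dual recurrence is given by transposed forward products -/
lemma bwd_transpose {A : Fin M → Matrix (Fin n) (Fin n) ℝ} {w : ℕ → Fin M → ℝ} :
    ∀ k, bwd (fun i => (A i)ᵀ) w k = (fwd A w k)ᵀ
  | 0 => by rw [bwd, fwd, Matrix.transpose_one]
  | k + 1 => by
      rw [bwd, fwd, Matrix.transpose_mul, bwd_transpose k]
      congr 1
      unfold Amix
      rw [Matrix.transpose_sum]
      exact Finset.sum_congr rfl fun i _ => (Matrix.transpose_smul _ _).symm

end SCD

namespace SCD

variable {n M : ℕ} {ι : Type*} {l : Filter ι}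

lemma tendsto_matrix_of_entries {F : ι → Matrix (Fin n) (Fin n) ℝ} {Q : Matrix (Fin n) (Fin n) ℝ}
    (h : ∀ a b, Tendsto (fun j => F j a b) l (nhds (Q a b))) : Tendsto F l (nhds Q) := by
  refine tendsto_pi_nhds.2 ?_
  intro a
  rw [tendsto_pi_nhds]
  exact h a

lemma entries_tendsto {F : ι → Matrix (Fin n) (Fin n) ℝ} {Q : Matrix (Fin n) (Fin n) ℝ}
    (h : Tendsto F l (nhds Q)) (a b : Fin n) : Tendsto (fun j => F j a b) l (nhds (Q a b)) := by
  replace h := tendsto_pi_nhds.1 h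
  have := h a
  rw [tendsto_pi_nhds] at this
  exact this b

lemma tendsto_matrix_mulVec {F : ι → Matrix (Fin n) (Fin n) ℝ} {Q : Matrix (Fin n) (Fin n) ℝ}
    (h : Tendsto F l (nhds Q)) (x : Fin n → ℝ) :
    Tendsto (fun j => F j *ᵥ x) l (nhds (Q *ᵥ x)) := by
  rw [tendsto_pi_nhds]
  intro a
  unfold Matrix.mulVec dotProduct
  exact tendsto_finset_sum _ fun c _ => (entries_tendsto h a c).mul_const (x c)

lemma tendsto_matrix_mul {F G : ι → Matrix (Fin n) (Fin n) ℝ}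
    {Q R : Matrix (Fin n) (Fin n) ℝ}
    (hF : Tendsto F l (nhds Q)) (hG : Tendsto G l (nhds R)) :
    Tendsto (fun j => F j * G j) l (nhds (Q * R)) := by
  refine tendsto_matrix_of_entries fun a b => ?_
  have : ∀ j, (F j * G j) a b = ∑ c, F j a c * G j c b := fun j => rfl
  simp_rw [this]
  have hQR : (Q * R) a b = ∑ c, Q a c * R c b := rfl
  rw [hQR]
  exact tendsto_finset_sum _ fun c _ => (entries_tendsto hF a c).mul (entries_tendsto hG c b)

lemma tendsto_matrix_transpose {F : ι → Matrix (Fin n) (Fin n) ℝ} {Q : Matrix (Fin n) (Fin n) ℝ}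
    (h : Tendsto F l (nhds Q)) : Tendsto (fun j => (F j)ᵀ) l (nhds Qᵀ) :=
  tendsto_matrix_of_entries fun a b => entries_tendsto h b a

lemma tendsto_amix {A : Fin M → Matrix (Fin n) (Fin n) ℝ} {W : ι → Fin M → ℝ} {w : Fin M → ℝ}
    (h : Tendsto W l (nhds w)) : Tendsto (fun j => Amix A (W j)) l (nhds (Amix A w)) := by
  refine tendsto_matrix_of_entries fun a b => ?_
  have he : ∀ (u : Fin M → ℝ), Amix A u a b = ∑ i, u i * A i a b := by
    intro u
    simp [Amix, Matrix.sum_apply]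
  simp_rw [he]
  rw [tendsto_pi_nhds] at h
  exact tendsto_finset_sum _ fun i _ => (h i).mul_const _

lemma tendsto_n2 {f : ι → Fin n → ℝ} {c : Fin n → ℝ} (h : Tendsto f l (nhds c)) :
    Tendsto (fun j => n2 (f j)) l (nhds (n2 c)) := by
  unfold n2 dotProduct
  rw [tendsto_pi_nhds] at h
  exact tendsto_finset_sum _ fun i _ => (h i).mul (h i)

lemma tendsto_of_n2_tendsto_zero {f : ι → Fin n → ℝ} {c : Fin n → ℝ}
    (h : Tendsto (fun j => n2 (f j - c)) l (nhds 0)) : Tendsto f l (nhds c) := by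
  rw [tendsto_pi_nhds]
  intro a
  have habs : Tendsto (fun j => |f j a - c a|) l (nhds 0) := by
    have hsq : Tendsto (fun j => (f j a - c a) ^ 2) l (nhds 0) := by
      refine tendsto_of_tendsto_of_tendsto_of_le_of_le tendsto_const_nhds h
        (fun j => sq_nonneg _) (fun j => ?_)
      have : (f j a - c a) ^ 2 = (f j - c) a * (f j - c) a := by
        simp [Pi.sub_apply, sq]
      rw [this]
      unfold n2 dotProduct
      exact Finset.single_le_sum (f := fun i => (f j - c) i * (f j - c) i)
        (fun i _ => mul_self_nonneg _) (Finset.mem_univ a)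
    have : Tendsto (fun j => Real.sqrt ((f j a - c a) ^ 2)) l (nhds (Real.sqrt 0)) :=
      (Real.continuous_sqrt.tendsto 0).comp hsq
    simpa [Real.sqrt_sq_eq_abs, Real.sqrt_zero] using this
  have hd : Tendsto (fun j => f j a - c a) l (nhds 0) := by
    refine tendsto_of_tendsto_of_tendsto_of_le_of_le (by simpa using habs.neg) habs
      (fun j => neg_abs_le _) (fun j => le_abs_self _)
  have := hd.add_const (c a)
  simpa using this

end SCD

namespace SCD

variable {n M : ℕ}

/-- The characterizing properties of the limit projection. -/
structure IsLim (A : Fin M → Matrix (Fin n) (Fin n) ℝ) (Q : Matrix (Fin n) (Fin n) ℝ) : Prop where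
  fixcol : ∀ i, A i * Q = Q
  fixes : ∀ z, (∀ i, A i *ᵥ z = z) → Q *ᵥ z = z
  symm : Qᵀ = Q

lemma IsLim.unique {A : Fin M → Matrix (Fin n) (Fin n) ℝ} {Q Q' : Matrix (Fin n) (Fin n) ℝ}
    (h : IsLim A Q) (h' : IsLim A Q') : Q = Q' := by
  have h1 : Q' * Q = Q := by
    refine eq_of_mulVec_eq fun x => ?_
    rw [← Matrix.mulVec_mulVec]
    refine h'.fixes _ fun i => ?_
    rw [Matrix.mulVec_mulVec, h.fixcol i]
  have h2 : Q * Q' = Q' := by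
    refine eq_of_mulVec_eq fun x => ?_
    rw [← Matrix.mulVec_mulVec]
    refine h.fixes _ fun i => ?_
    rw [Matrix.mulVec_mulVec, h'.fixcol i]
  have h3 := congrArg Matrix.transpose h1
  rw [Matrix.transpose_mul, h.symm, h'.symm] at h3
  rw [← h3, h2]

lemma symm_of_proj {Q : Matrix (Fin n) (Fin n) ℝ}
    (hidem : ∀ x, Q *ᵥ (Q *ᵥ x) = Q *ᵥ x) (hcontr : ∀ x, n2 (Q *ᵥ x) ≤ n2 x) : Qᵀ = Q := by
  have orth : ∀ x y, (Q *ᵥ x) ⬝ᵥ (y - Q *ᵥ y) = 0 := by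
    intro x y
    set u := Q *ᵥ x with hu
    set v := y - Q *ᵥ y with hv
    have hQu : Q *ᵥ u = u := hidem x
    have hQv : Q *ᵥ v = 0 := by
      rw [hv, Matrix.mulVec_sub, hidem y, sub_self]
    have key : ∀ t : ℝ, 0 ≤ n2 v + 2 * t * (u ⬝ᵥ v) := by
      intro t
      have h1 : n2 (Q *ᵥ (v + t • u)) ≤ n2 (v + t • u) := hcontr _
      have h2 : Q *ᵥ (v + t • u) = t • u := by
        rw [Matrix.mulVec_add, hQv, Matrix.mulVec_smul, hQu, zero_add]
      rw [h2] at h1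
      have e1 : n2 (t • u) = t ^ 2 * n2 u := by
        unfold n2
        rw [smul_dotProduct, dotProduct_smul, smul_eq_mul, smul_eq_mul]
        ring
      have e2 : n2 (v + t • u) = n2 v + 2 * t * (u ⬝ᵥ v) + t ^ 2 * n2 u := by
        unfold n2
        rw [add_dotProduct, dotProduct_add, dotProduct_add,
          smul_dotProduct, dotProduct_smul, smul_dotProduct,
          dotProduct_smul, dotProduct_comm v u]
        simp only [smul_eq_mul]
        ring
      rw [e1, e2] at h1
      linarith
    by_contra hne
    have hd : u ⬝ᵥ v ≠ 0 := hne
    have hthis := key (-(n2 v + 1) / (2 * (u ⬝ᵥ v)))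
    have h2 : 2 * (-(n2 v + 1) / (2 * (u ⬝ᵥ v))) * (u ⬝ᵥ v) = -(n2 v + 1) := by
      field_simp
    rw [h2] at hthis
    linarith
  have dotid : ∀ x y, (Q *ᵥ x) ⬝ᵥ y = (Q *ᵥ x) ⬝ᵥ (Q *ᵥ y) := by
    intro x y
    have := orth x y
    rw [dotProduct_sub] at this
    linarith
  ext a b
  have h1 : (Q *ᵥ Pi.single b 1) ⬝ᵥ (Pi.single a 1) = Q a b := by
    have : (Q *ᵥ Pi.single b 1) a = Q a b := by
      simp [Matrix.mulVec, dotProduct_single]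
    rw [dotProduct_single, mul_one, this]
  have h2 : (Q *ᵥ Pi.single a 1) ⬝ᵥ (Pi.single b 1) = Q b a := by
    have : (Q *ᵥ Pi.single a 1) b = Q b a := by
      simp [Matrix.mulVec, dotProduct_single]
    rw [dotProduct_single, mul_one, this]
  have h3 := dotid (Pi.single b 1) (Pi.single a 1)
  have h4 := dotid (Pi.single a 1) (Pi.single b 1)
  rw [h1] at h3
  rw [h2] at h4
  rw [Matrix.transpose_apply, h4, h3, dotProduct_comm]

end SCD

namespace SCD

variable {n M : ℕ}

lemma exists_isLim {A : Fin M → Matrix (Fin n) (Fin n) ℝ}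
    (hC : ∀ i x, n2 (A i *ᵥ x) ≤ n2 x) (hS : StronglyConvergent A)
    {v : ℕ → Fin M → ℝ} (hv : ∀ k, InSimplex (v k)) :
    ∃ Q, IsLim A Q ∧ Tendsto (bwd A v) atTop (nhds Q) := by
  -- each column of the backward products is a solution
  have hsol : ∀ b : Fin n, IsInclusionSolution A (fun k => bwd A v k *ᵥ Pi.single b 1) := by
    intro b
    exact ⟨v, hv, fun k => by simp only []; rw [bwd_succ, ← Matrix.mulVec_mulVec]⟩
  choose xbar hfix htends using fun b => hS _ (hsol b)
  set Q : Matrix (Fin n) (Fin n) ℝ := Matrix.of (fun a b => xbar b a) with hQdef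
  have hAfix : ∀ i b, A i *ᵥ xbar b = xbar b := by
    intro i b
    have := hfix b i
    rw [Matrix.sub_mulVec, Matrix.one_mulVec, sub_eq_zero] at this
    exact this
  have hTend : Tendsto (bwd A v) atTop (nhds Q) := by
    refine tendsto_matrix_of_entries fun a b => ?_
    have he : ∀ k, bwd A v k a b = (bwd A v k *ᵥ Pi.single b 1) a := by
      intro k
      simp [Matrix.mulVec, dotProduct_single]
    simp_rw [he]
    have := htends b
    rw [tendsto_pi_nhds] at this
    exact this a
  have hcolfix : ∀ i, A i * Q = Q := by
    intro i
    ext a b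
    have : (A i * Q) a b = (A i *ᵥ xbar b) a := by
      simp [Matrix.mul_apply, Matrix.mulVec, dotProduct, hQdef]
    rw [this, hAfix i b]
    rfl
  have hfixes : ∀ z, (∀ i, A i *ᵥ z = z) → Q *ᵥ z = z := by
    intro z hz
    have h1 : Tendsto (fun k => bwd A v k *ᵥ z) atTop (nhds (Q *ᵥ z)) :=
      tendsto_matrix_mulVec hTend z
    have h2 : ∀ k, bwd A v k *ᵥ z = z := bwd_fixes hz hv
    simp_rw [h2] at h1
    exact tendsto_nhds_unique h1 tendsto_const_nhds
  have hcontr : ∀ x, n2 (Q *ᵥ x) ≤ n2 x := by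
    intro x
    have h1 : Tendsto (fun k => n2 (bwd A v k *ᵥ x)) atTop (nhds (n2 (Q *ᵥ x))) :=
      tendsto_n2 (tendsto_matrix_mulVec hTend x)
    exact le_of_tendsto h1 (Filter.Eventually.of_forall fun k => n2_bwd_le hC hv k x)
  have hidem : ∀ x, Q *ᵥ (Q *ᵥ x) = Q *ᵥ x := by
    intro x
    refine hfixes _ fun i => ?_
    rw [Matrix.mulVec_mulVec, hcolfix i]
  exact ⟨Q, ⟨hcolfix, hfixes, symm_of_proj hidem hcontr⟩, hTend⟩

lemma simplex_isCompact : IsCompact {w : Fin M → ℝ | InSimplex w} := by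
  have hsub : {w : Fin M → ℝ | InSimplex w} ⊆ Set.Icc 0 1 := by
    rintro w ⟨h0, h1⟩
    refine ⟨fun i => h0 i, fun i => ?_⟩
    calc w i ≤ ∑ j, w j := Finset.single_le_sum (fun j _ => h0 j) (Finset.mem_univ i)
      _ = 1 := h1
  have hclosed : IsClosed {w : Fin M → ℝ | InSimplex w} := by
    have heq : {w : Fin M → ℝ | InSimplex w}
        = (⋂ i, {w : Fin M → ℝ | 0 ≤ w i}) ∩ {w : Fin M → ℝ | ∑ i, w i = 1} := by
      ext w
      simp [InSimplex, Set.mem_iInter]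
    rw [heq]
    exact ((isClosed_iInter fun i =>
      isClosed_le continuous_const (continuous_apply i))).inter
      (isClosed_eq (continuous_finset_sum _ fun i _ => continuous_apply i) continuous_const)
  exact IsCompact.of_isClosed_subset isCompact_Icc hclosed hsub

lemma words_isCompact :
    IsCompact {v : ℕ → Fin M → ℝ | ∀ k, InSimplex (v k)} :=
  isCompact_pi_infinite fun _ => simplex_isCompact

end SCD

namespace SCD

variable {n M : ℕ}

lemma n2_zero : n2 (0 : Fin n → ℝ) = 0 := by simp [n2]

lemma tendsto_bwd_word {A : Fin M → Matrix (Fin n) (Fin n) ℝ}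
    {u : ℕ → ℕ → Fin M → ℝ} {v : ℕ → Fin M → ℝ}
    (h : ∀ i, Tendsto (fun j => u j i) atTop (nhds (v i))) :
    ∀ t, Tendsto (fun j => bwd A (u j) t) atTop (nhds (bwd A v t))
  | 0 => by
      simp only [bwd_zero]
      exact tendsto_const_nhds
  | t + 1 => by
      simp only [bwd_succ]
      exact tendsto_matrix_mul (tendsto_amix (h t)) (tendsto_bwd_word h t)

lemma fwd_tendsto {A : Fin M → Matrix (Fin n) (Fin n) ℝ}
    (hC : ∀ i x, n2 (A i *ᵥ x) ≤ n2 x) (hS : StronglyConvergent A)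
    {w : ℕ → Fin M → ℝ} (hw : ∀ k, InSimplex (w k))
    {Q : Matrix (Fin n) (Fin n) ℝ} (hQ : IsLim A Q) :
    Tendsto (fwd A w) atTop (nhds Q) := by
  apply tendsto_of_subseq_tendsto
  intro ns hns
  set u : ℕ → ℕ → Fin M → ℝ := fun j i => if i < ns j then w (ns j - 1 - i) else w 0 with hudef
  have hu : ∀ j, u j ∈ {v : ℕ → Fin M → ℝ | ∀ k, InSimplex (v k)} := by
    intro j k
    by_cases h : k < ns j
    · simpa [hudef, h] using hw _
    · simpa [hudef, h] using hw 0
  obtain ⟨v, hv, φ, hφ, hconv⟩ := words_isCompact.tendsto_subseq hu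
  refine ⟨φ, ?_⟩
  have hv' : ∀ k, InSimplex (v k) := hv
  obtain ⟨Qv, hQv, hQvt⟩ := exists_isLim hC hS hv'
  have hQQ : Qv = Q := hQv.unique hQ
  rw [hQQ] at hQvt
  have hnsφ : Tendsto (fun j => ns (φ j)) atTop atTop := hns.comp hφ.tendsto_atTop
  have hentry : ∀ i, Tendsto (fun j => u (φ j) i) atTop (nhds (v i)) := by
    intro i
    have := (tendsto_pi_nhds.1 hconv) i
    exact this
  have hvec : ∀ x, Tendsto (fun j => n2 (fwd A w (ns (φ j)) *ᵥ x - Q *ᵥ x)) atTop (nhds 0) := by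
    intro x
    rw [tendsto_order]
    constructor
    · intro a ha
      exact Filter.Eventually.of_forall fun j => lt_of_lt_of_le ha (n2_nonneg _)
    · intro ε hε
      -- choose t
      have hb : Tendsto (fun t => n2 (bwd A v t *ᵥ x - Q *ᵥ x)) atTop (nhds 0) := by
        have h1 := (tendsto_matrix_mulVec hQvt x).sub (tendsto_const_nhds (x := Q *ᵥ x))
        rw [sub_self] at h1
        have := tendsto_n2 h1
        rwa [n2_zero] at this
      obtain ⟨t, ht⟩ := (hb.eventually_lt_const (show (0:ℝ) < ε/8 by linarith)).exists
      have hword : Tendsto (fun j => n2 (bwd A (u (φ j)) t *ᵥ x - bwd A v t *ᵥ x)) atTop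
          (nhds 0) := by
        have h1 := (tendsto_matrix_mulVec (tendsto_bwd_word (A := A) hentry t) x).sub
          (tendsto_const_nhds (x := bwd A v t *ᵥ x))
        rw [sub_self] at h1
        have := tendsto_n2 h1
        rwa [n2_zero] at this
      have ev1 := hword.eventually_lt_const (show (0:ℝ) < ε/8 by linarith)
      have ev2 : ∀ᶠ j in atTop, t ≤ ns (φ j) := hnsφ.eventually_ge_atTop t
      filter_upwards [ev1, ev2] with j hj1 hj2
      set m := ns (φ j) with hm
      have hbw : bwd A (fun i => w (m - 1 - i)) t = bwd A (u (φ j)) t := by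
        refine bwd_congr fun i hi => ?_
        have hlt : i < ns (φ j) := lt_of_lt_of_le hi hj2
        simp [hudef, hlt, hm]
      have hdiff : fwd A w m *ᵥ x - Q *ᵥ x
          = fwd A w (m - t) *ᵥ (bwd A (u (φ j)) t *ᵥ x - Q *ᵥ x) := by
        rw [Matrix.mulVec_sub]
        congr 1
        · rw [fwd_decomp hj2, hbw, ← Matrix.mulVec_mulVec]
        · rw [Matrix.mulVec_mulVec, fwd_mul_of_fix hQ.fixcol hw (m - t)]
      rw [hdiff]
      have h1 : n2 (fwd A w (m - t) *ᵥ (bwd A (u (φ j)) t *ᵥ x - Q *ᵥ x))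
          ≤ n2 (bwd A (u (φ j)) t *ᵥ x - Q *ᵥ x) := n2_fwd_le hC hw _ _
      have h2 : bwd A (u (φ j)) t *ᵥ x - Q *ᵥ x
          = (bwd A (u (φ j)) t *ᵥ x - bwd A v t *ᵥ x) + (bwd A v t *ᵥ x - Q *ᵥ x) := by
        abel
      have h3 := n2_add_le (bwd A (u (φ j)) t *ᵥ x - bwd A v t *ᵥ x)
        (bwd A v t *ᵥ x - Q *ᵥ x)
      rw [← h2] at h3
      calc n2 (fwd A w (m - t) *ᵥ (bwd A (u (φ j)) t *ᵥ x - Q *ᵥ x))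
          ≤ n2 (bwd A (u (φ j)) t *ᵥ x - Q *ᵥ x) := h1
        _ < ε := by linarith
  refine tendsto_matrix_of_entries fun a b => ?_
  have he : ∀ j, fwd A w (ns (φ j)) a b = (fwd A w (ns (φ j)) *ᵥ Pi.single b 1) a := by
    intro j
    simp [Matrix.mulVec, dotProduct_single]
  have hq : Q a b = (Q *ᵥ Pi.single b 1) a := by
    simp [Matrix.mulVec, dotProduct_single]
  simp_rw [he, hq]
  have := tendsto_of_n2_tendsto_zero (hvec (Pi.single b 1))
  rw [tendsto_pi_nhds] at this
  exact this a

end SCD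

namespace SCD

variable {n M : ℕ}

lemma amix_transpose (A : Fin M → Matrix (Fin n) (Fin n) ℝ) (w : Fin M → ℝ) :
    Amix (fun i => (A i)ᵀ) w = (Amix A w)ᵀ := by
  unfold Amix
  rw [Matrix.transpose_sum]
  exact Finset.sum_congr rfl fun i _ => (Matrix.transpose_smul _ _).symm

/-- Key duality: for a family of Euclidean contractions, strong convergence
implies strong convergence of the transposed family. -/
lemma key {A : Fin M → Matrix (Fin n) (Fin n) ℝ}
    (hC : ∀ i x, n2 (A i *ᵥ x) ≤ n2 x) (hS : StronglyConvergent A) :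
    StronglyConvergent (fun i => (A i)ᵀ) := by
  rintro y ⟨w, hw, hrec⟩
  obtain ⟨Q, hQ, -⟩ := exists_isLim hC hS (v := fun _ => w 0) (fun _ => hw 0)
  have hfwd := fwd_tendsto hC hS hw hQ
  have hyk : ∀ k, y k = (fwd A w k)ᵀ *ᵥ (y 0) := by
    intro k
    induction k with
    | zero => rw [fwd_zero, Matrix.transpose_one, Matrix.one_mulVec]
    | succ k ih =>
        rw [hrec k, ih, amix_transpose, Matrix.mulVec_mulVec, fwd_succ,
          Matrix.transpose_mul]
  refine ⟨Q *ᵥ y 0, ?_, ?_⟩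
  · intro i
    have hAQ : (A i)ᵀ * Q = Q := by
      refine eq_of_mulVec_eq fun x => ?_
      rw [← Matrix.mulVec_mulVec]
      exact transpose_fixed (hC i) (by rw [Matrix.mulVec_mulVec, hQ.fixcol i])
    simp only []
    rw [Matrix.sub_mulVec, Matrix.one_mulVec, Matrix.mulVec_mulVec, hAQ, sub_self]
  · have ht : Tendsto (fun k => (fwd A w k)ᵀ) atTop (nhds Qᵀ) :=
      tendsto_matrix_transpose hfwd
    rw [hQ.symm] at ht
    exact Filter.Tendsto.congr (fun k => (hyk k).symm) (tendsto_matrix_mulVec ht (y 0))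

end SCD

namespace SCD

variable {n M : ℕ}

lemma tendsto_mulVec_vec {ι : Type*} {l : Filter ι} (S : Matrix (Fin n) (Fin n) ℝ)
    {f : ι → Fin n → ℝ} {c : Fin n → ℝ} (h : Tendsto f l (nhds c)) :
    Tendsto (fun j => S *ᵥ f j) l (nhds (S *ᵥ c)) := by
  rw [tendsto_pi_nhds]
  intro a
  unfold Matrix.mulVec dotProduct
  rw [tendsto_pi_nhds] at h
  exact tendsto_finset_sum _ fun b _ => (h b).const_mul (S a b)

lemma sc_conj {A : Fin M → Matrix (Fin n) (Fin n) ℝ} {S T : Matrix (Fin n) (Fin n) ℝ}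
    (hST : S * T = 1) (hTS : T * S = 1) (h : StronglyConvergent A) :
    StronglyConvergent (fun i => S * A i * T) := by
  rintro y ⟨w, hw, hrec⟩
  have hamix : ∀ k, Amix (fun i => S * A i * T) (w k) = S * Amix A (w k) * T := by
    intro k
    unfold Amix
    rw [Finset.mul_sum, Finset.sum_mul]
    refine Finset.sum_congr rfl fun i _ => ?_
    rw [mul_smul_comm, smul_mul_assoc]
  have hx : IsInclusionSolution A (fun k => T *ᵥ y k) := by
    refine ⟨w, hw, fun k => ?_⟩
    simp only []
    rw [hrec k, hamix k, Matrix.mulVec_mulVec]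
    have hcl : T * (S * Amix A (w k) * T) = Amix A (w k) * T := by
      rw [← mul_assoc, ← mul_assoc, hTS, one_mul]
    rw [hcl, ← Matrix.mulVec_mulVec]
  obtain ⟨xbar, hfix, htend⟩ := h _ hx
  refine ⟨S *ᵥ xbar, ?_, ?_⟩
  · intro i
    simp only []
    have halg : (S * A i * T - 1) * S = S * (A i - 1) := by
      rw [sub_mul, one_mul, mul_assoc (S * A i) T S, hTS, mul_one, mul_sub, mul_one]
    rw [Matrix.mulVec_mulVec, halg, ← Matrix.mulVec_mulVec, hfix i, Matrix.mulVec_zero]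
  · have hy : ∀ k, y k = S *ᵥ (T *ᵥ y k) := fun k => by
      rw [Matrix.mulVec_mulVec, hST, Matrix.one_mulVec]
    exact Filter.Tendsto.congr (fun k => (hy k).symm) (tendsto_mulVec_vec S htend)

end SCD


open SCD

/-- if the difference inclusion admits a weak quadratic Lyapunov
function, then it is strongly convergent iff the dual inclusion (generated by the
transposed matrices) is strongly convergent. -/
theorem wqlf_strong_convergence_duality
    (n M : ℕ) (A : Fin M → Matrix (Fin n) (Fin n) ℝ)
    (P : Matrix (Fin n) (Fin n) ℝ) (hP : P.PosDef)
    (hwQLF : ∀ i, (-((A i)ᵀ * P * (A i) - P)).PosSemidef) :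
    StronglyConvergent A ↔ StronglyConvergent (fun i => (A i)ᵀ) := by
  have hPsd := hP.posSemidef
  obtain ⟨S, hSsymm, hSS⟩ : ∃ S : Matrix (Fin n) (Fin n) ℝ, Sᵀ = S ∧ S * S = P := by
    open MatrixOrder in
    refine ⟨CFC.sqrt P, ?_, CFC.sqrt_mul_sqrt_self P (nonneg_iff_posSemidef.2 hPsd)⟩
    open MatrixOrder in
    have h := (nonneg_iff_posSemidef.1 (CFC.sqrt_nonneg P)).isHermitian
    rwa [Matrix.IsHermitian, Matrix.conjTranspose_eq_transpose_of_trivial] at h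
  have hdet : IsUnit S.det := by
    have h1 : S.det * S.det = P.det := by rw [← Matrix.det_mul, hSS]
    have h2 := hP.det_pos
    refine isUnit_iff_ne_zero.2 fun h0 => ?_
    rw [h0, mul_zero] at h1
    rw [← h1] at h2
    exact lt_irrefl _ h2
  set T := S⁻¹ with hTdef
  have hST : S * T = 1 := Matrix.mul_nonsing_inv S hdet
  have hTS : T * S = 1 := Matrix.nonsing_inv_mul S hdet
  -- conjugated family is a family of Euclidean contractions
  have hSdot : ∀ z : Fin n → ℝ, n2 (S *ᵥ z) = z ⬝ᵥ (P *ᵥ z) := by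
    intro z
    rw [← hSS, ← Matrix.mulVec_mulVec, Matrix.dotProduct_mulVec]
    conv_rhs => rw [← hSsymm, Matrix.vecMul_transpose]
    unfold n2
    rw [hSsymm]
  have hBcontr : ∀ i x, n2 ((S * A i * T) *ᵥ x) ≤ n2 x := by
    intro i x
    set y := T *ᵥ x with hydef
    have hxy : x = S *ᵥ y := by
      rw [hydef, Matrix.mulVec_mulVec, hST, Matrix.one_mulVec]
    have hBx : (S * A i * T) *ᵥ x = S *ᵥ (A i *ᵥ y) := by
      rw [hydef, Matrix.mulVec_mulVec, Matrix.mulVec_mulVec, mul_assoc]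
    have hquad : (A i *ᵥ y) ⬝ᵥ (P *ᵥ (A i *ᵥ y)) ≤ y ⬝ᵥ (P *ᵥ y) := by
      have h0 := (hwQLF i).dotProduct_mulVec_nonneg y
      have hsy : star y = y := by
        funext a
        simp
      rw [hsy] at h0
      have hexp : (-((A i)ᵀ * P * A i - P)) *ᵥ y = P *ᵥ y - (A i)ᵀ *ᵥ (P *ᵥ (A i *ᵥ y)) := by
        rw [Matrix.neg_mulVec, Matrix.sub_mulVec, neg_sub]
        congr 1
        rw [mul_assoc, ← Matrix.mulVec_mulVec, ← Matrix.mulVec_mulVec]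
      rw [hexp, dotProduct_sub] at h0
      have hadj : y ⬝ᵥ ((A i)ᵀ *ᵥ (P *ᵥ (A i *ᵥ y))) = (A i *ᵥ y) ⬝ᵥ (P *ᵥ (A i *ᵥ y)) := by
        rw [Matrix.dotProduct_mulVec, Matrix.vecMul_transpose]
      rw [hadj] at h0
      linarith
    rw [hBx, hSdot, hxy, hSdot]
    exact hquad
  have hBTcontr : ∀ i x, n2 ((S * A i * T)ᵀ *ᵥ x) ≤ n2 x :=
    fun i => n2_transpose_le (hBcontr i)
  have hTsymm : Tᵀ = T := by
    rw [hTdef, Matrix.transpose_nonsing_inv, hSsymm]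
  have hEq : (fun i => (S * A i * T)ᵀ) = (fun i => T * (A i)ᵀ * S) := by
    funext i
    rw [Matrix.transpose_mul, Matrix.transpose_mul, hSsymm, hTsymm, mul_assoc]
  constructor
  · intro hA
    have hB : StronglyConvergent (fun i => S * A i * T) := sc_conj hST hTS hA
    have hBT := key hBcontr hB
    rw [hEq] at hBT
    have h2 := sc_conj hST hTS hBT
    have hEq2 : (fun i => S * (T * (A i)ᵀ * S) * T) = fun i => (A i)ᵀ := by
      funext i
      rw [← mul_assoc, ← mul_assoc, hST, one_mul, mul_assoc, hST, mul_one]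
    rwa [hEq2] at h2
  · intro hAT
    have hBT : StronglyConvergent (fun i => T * (A i)ᵀ * S) := sc_conj hTS hST hAT
    rw [← hEq] at hBT
    have hB := key hBTcontr hBT
    have hEq3 : (fun i => ((S * A i * T)ᵀ)ᵀ) = fun i => S * A i * T := by
      funext i
      rw [Matrix.transpose_transpose]
    rw [hEq3] at hB
    have h2 := sc_conj hTS hST hB
    have hEq4 : (fun i => T * (S * A i * T) * S) = A := by
      funext i
      rw [← mul_assoc, ← mul_assoc, hTS, one_mul, mul_assoc, hTS, mul_one]
    rwa [hEq4] at h2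
end
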